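/- Let α > 0, K ≥ 1, and let E = {x_1, …, x_N} be a sorted 2d Pareto front. The number of distinct partitions of E into K nonempty subsets that occur as the clusters of some local minimum of K-α-Med2dPF is at most the binomial coefficient C(N, K) (N choose K). -/

import Mathlib

open scoped Classical

/-- Points of the plane with the Euclidean structure. -/
abbrev E2 := EuclideanSpace ℝ (Fin 2)

/-- An (unordered) partition `π` of `E` into `K` nonempty subsets is a local minimum of
K-α-Med2dPF if there is a choice of `α`-medoids, one in each part, such that every point
is at least as close to the medoid of its own part as to any other medoid. -/
def IsLocalMinPartition (α : ℝ) (E : Finset E2) (K : ℕ) (π : Finset (Finset E2)) : Prop :=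
  π.card = K ∧ (∀ p ∈ π, p.Nonempty) ∧
  (∀ p ∈ π, ∀ q ∈ π, p ≠ q → Disjoint p q) ∧
  π.biUnion id = E ∧
  ∃ c : Finset E2 → E2, ∀ p ∈ π, c p ∈ p ∧
    (∀ y ∈ p, ∑ z ∈ p, dist z (c p) ^ α ≤ ∑ z ∈ p, dist z y ^ α) ∧
    (∀ q ∈ π, q ≠ p → ∀ y ∈ p, dist y (c p) ≤ dist y (c q))

namespace KMedAux

/-- The index set of a part. -/
noncomputable def idxs (N : ℕ) (x : ℕ → E2) (p : Finset E2) : Finset ℕ :=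
  (Finset.Icc 1 N).filter (fun i => x i ∈ p)

/-- The least index of a part. -/
noncomputable def mins (N : ℕ) (x : ℕ → E2) (p : Finset E2) : ℕ :=
  WithTop.untopD 0 (idxs N x p).min

lemma min_unbot_mem {s : Finset ℕ} (h : s.Nonempty) : WithTop.untopD 0 s.min ∈ s := by
  rw [← Finset.coe_min' h, WithTop.untopD_coe]
  exact Finset.min'_mem s h

lemma min_unbot_le {s : Finset ℕ} (h : s.Nonempty) {i : ℕ} (hi : i ∈ s) :
    WithTop.untopD 0 s.min ≤ i := by
  rw [← Finset.coe_min' h, WithTop.untopD_coe]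
  exact Finset.min'_le s i hi

section Geometry

variable {N : ℕ} {x : ℕ → E2}
  (hsort : ∀ i j, 1 ≤ i → i < j → j ≤ N → x i 0 < x j 0 ∧ x j 1 < x i 1)

include hsort

lemma dist_mono {a b c : ℕ} (ha1 : 1 ≤ a) (hab : a < b) (hbc : b < c) (hcN : c ≤ N) :
    dist (x a) (x b) < dist (x a) (x c) ∧ dist (x b) (x c) < dist (x a) (x c) := by
  have hb1 : 1 ≤ b := le_trans ha1 hab.le
  have hbN : b ≤ N := le_trans hbc.le hcN
  have H1 := hsort a b ha1 hab hbN
  have H2 := hsort b c hb1 hbc hcN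
  have H3 := hsort a c ha1 (hab.trans hbc) hcN
  have e : ∀ u v : E2, dist u v = Real.sqrt ((u 0 - v 0) ^ 2 + (u 1 - v 1) ^ 2) := by
    intro u v
    rw [EuclideanSpace.dist_eq]
    congr 1
    simp [Fin.sum_univ_two, Real.dist_eq, sq_abs]
  constructor
  · rw [e, e]
    apply Real.sqrt_lt_sqrt (by positivity)
    nlinarith [H1.1, H1.2, H2.1, H2.2, H3.1, H3.2,
      mul_pos (sub_pos.2 H1.1) (sub_pos.2 H2.1),
      mul_pos (sub_pos.2 H2.2) (sub_pos.2 H1.2)]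
  · rw [e, e]
    apply Real.sqrt_lt_sqrt (by positivity)
    nlinarith [H1.1, H1.2, H2.1, H2.2, H3.1, H3.2,
      mul_pos (sub_pos.2 H1.1) (sub_pos.2 H2.1),
      mul_pos (sub_pos.2 H2.2) (sub_pos.2 H1.2)]

lemma x_injOn {i j : ℕ} (hi : i ∈ Finset.Icc 1 N) (hj : j ∈ Finset.Icc 1 N)
    (h : x i = x j) : i = j := by
  rw [Finset.mem_Icc] at hi hj
  rcases lt_trichotomy i j with hlt | heq | hgt
  · exact absurd (congrArg (· 0) h) (ne_of_lt (hsort i j hi.1 hlt hj.2).1)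
  · exact heq
  · exact absurd (congrArg (· 0) h) (ne_of_gt (hsort j i hj.1 hgt hi.2).1)

end Geometry

section Structure

variable {α : ℝ} {K N : ℕ} {x : ℕ → E2}
  (hsort : ∀ i j, 1 ≤ i → i < j → j ≤ N → x i 0 < x j 0 ∧ x j 1 < x i 1)
  {π : Finset (Finset E2)}
  (hπ : IsLocalMinPartition α ((Finset.Icc 1 N).image x) K π)

include hπ

lemma part_subset {p : Finset E2} (hp : p ∈ π) :
    p ⊆ (Finset.Icc 1 N).image x := by
  obtain ⟨-, -, -, hcover, -⟩ := id hπ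
  rw [← hcover]
  exact Finset.subset_biUnion_of_mem id hp

lemma idxs_nonempty {p : Finset E2} (hp : p ∈ π) : (idxs N x p).Nonempty := by
  obtain ⟨y, hy⟩ := hπ.2.1 p hp
  obtain ⟨i, hi, rfl⟩ := Finset.mem_image.1 (part_subset hπ hp hy)
  exact ⟨i, Finset.mem_filter.2 ⟨hi, hy⟩⟩

lemma part_eq {p : Finset E2} (hp : p ∈ π) : p = (idxs N x p).image x := by
  apply Finset.Subset.antisymm
  · intro y hy
    obtain ⟨i, hi, rfl⟩ := Finset.mem_image.1 (part_subset hπ hp hy)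
    exact Finset.mem_image_of_mem x (Finset.mem_filter.2 ⟨hi, hy⟩)
  · intro y hy
    obtain ⟨i, hi, rfl⟩ := Finset.mem_image.1 hy
    exact (Finset.mem_filter.1 hi).2

include hsort

/-- Key convexity property: the index set of each part of a local minimum is an interval. -/
lemma convex {p : Finset E2} (hp : p ∈ π) :
    ∀ i ∈ idxs N x p, ∀ k ∈ idxs N x p, ∀ j ∈ Finset.Icc 1 N,
      i ≤ j → j ≤ k → j ∈ idxs N x p := by
  obtain ⟨hcard, hne, hdisj, hcover, c, hc⟩ := id hπ
  -- medoid index of p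
  have hcpE : c p ∈ (Finset.Icc 1 N).image x := part_subset hπ hp (hc p hp).1
  obtain ⟨m, hm, hxm⟩ := Finset.mem_image.1 hcpE
  have key : ∀ j ∈ Finset.Icc 1 N, ∀ i ∈ Finset.Icc 1 N, x i ∈ p →
      ((i < j ∧ j < m) ∨ (m < j ∧ j < i)) → x j ∈ p := by
    intro j hj i hi hxi hcase
    by_contra hxj
    have hjE : x j ∈ π.biUnion id := by
      rw [hcover]; exact Finset.mem_image_of_mem x hj
    obtain ⟨q, hq, hxjq⟩ := Finset.mem_biUnion.1 hjE
    simp only [id] at hxjq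
    have hqp : q ≠ p := by rintro rfl; exact hxj hxjq
    have hcqE : c q ∈ (Finset.Icc 1 N).image x := part_subset hπ hq (hc q hq).1
    obtain ⟨m', hm', hxm'⟩ := Finset.mem_image.1 hcqE
    have h1 : dist (x i) (x m) ≤ dist (x i) (x m') := by
      rw [hxm, hxm']; exact (hc p hp).2.2 q hq hqp (x i) hxi
    have h2 : dist (x j) (x m') ≤ dist (x j) (x m) := by
      rw [hxm, hxm']; exact (hc q hq).2.2 p hp (Ne.symm hqp) (x j) hxjq
    have hdisjpq : Disjoint p q := hdisj p hp q hq (Ne.symm hqp)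
    have hxm'q : x m' ∈ q := hxm' ▸ (hc q hq).1
    have hxmp : x m ∈ p := hxm ▸ (hc p hp).1
    have hmm' : m' ≠ m := by
      rintro rfl; exact (Finset.disjoint_left.1 hdisjpq hxmp) hxm'q
    have him' : m' ≠ i := by
      rintro rfl; exact (Finset.disjoint_left.1 hdisjpq hxi) hxm'q
    rw [Finset.mem_Icc] at hi hj hm hm'
    rcases hcase with ⟨hij, hjm⟩ | ⟨hmj, hji⟩
    · rcases lt_trichotomy m' i with hlt | heq | hgt
      · have A := (dist_mono hsort hm'.1 hlt hij hj.2).1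
        rw [dist_comm (x m') (x i), dist_comm (x m') (x j)] at A
        have B := (dist_mono hsort hi.1 hij hjm hm.2).2
        linarith
      · exact him' heq
      · rcases lt_trichotomy m' m with hlt2 | heq2 | hgt2
        · have C := (dist_mono hsort hi.1 hgt hlt2 hm.2).1
          linarith
        · exact hmm' heq2
        · have D := (dist_mono hsort hj.1 hjm hgt2 hm'.2).1
          linarith
    · rcases lt_trichotomy i m' with hlt | heq | hgt
      · have A := (dist_mono hsort hj.1 hji hlt hm'.2).2
        have B := (dist_mono hsort hm.1 hmj hji hi.2).1
        rw [dist_comm (x m) (x j), dist_comm (x m) (x i)] at B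
        linarith
      · exact him' heq.symm
      · rcases lt_trichotomy m m' with hlt2 | heq2 | hgt2
        · have C := (dist_mono hsort hm.1 hlt2 hgt hi.2).2
          rw [dist_comm (x m') (x i), dist_comm (x m) (x i)] at C
          linarith
        · exact hmm' heq2.symm
        · have D := (dist_mono hsort hm'.1 hgt2 hmj hj.2).2
          rw [dist_comm (x m) (x j), dist_comm (x m') (x j)] at D
          linarith
  intro i hi k hk j hj hij hjk
  rw [idxs, Finset.mem_filter] at hi hk ⊢
  refine ⟨hj, ?_⟩
  rcases lt_trichotomy j m with hjm | rfl | hmj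
  · rcases eq_or_lt_of_le hij with rfl | hij'
    · exact hi.2
    · exact key j hj i hi.1 hi.2 (Or.inl ⟨hij', hjm⟩)
  · exact hxm ▸ (hc p hp).1
  · rcases eq_or_lt_of_le hjk with rfl | hjk'
    · exact hk.2
    · exact key j hj k hk.1 hk.2 (Or.inr ⟨hmj, hjk'⟩)

/-- Membership in a part's index set is characterized by the set of left endpoints. -/
lemma mem_idxs_iff {p : Finset E2} (hp : p ∈ π) {j : ℕ} (hj : j ∈ Finset.Icc 1 N) :
    j ∈ idxs N x p ↔
      (mins N x p ≤ j ∧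
        ∀ t ∈ π.image (mins N x), t ≤ j → t ≤ mins N x p) := by
  obtain ⟨hcard, hne, hdisj, hcover, c, hc⟩ := id hπ
  have hnep : ∀ q ∈ π, (idxs N x q).Nonempty := fun q hq => idxs_nonempty hπ hq
  have hminmem : ∀ q ∈ π, mins N x q ∈ idxs N x q := fun q hq =>
    min_unbot_mem (hnep q hq)
  have hsub : ∀ q ∈ π, idxs N x q ⊆ Finset.Icc 1 N := fun q hq =>
    Finset.filter_subset _ _
  have hdisjI : ∀ q ∈ π, ∀ r ∈ π, ∀ t : ℕ, t ∈ idxs N x q → t ∈ idxs N x r → q = r := by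
    intro q hq r hr t htq htr
    by_contra hqr
    have := hdisj q hq r hr hqr
    exact (Finset.disjoint_left.1 this (Finset.mem_filter.1 htq).2)
      (Finset.mem_filter.1 htr).2
  constructor
  · intro hjp
    refine ⟨min_unbot_le (hnep p hp) hjp, ?_⟩
    intro t ht htj
    obtain ⟨q, hq, rfl⟩ := Finset.mem_image.1 ht
    by_contra hts
    push_neg at hts
    -- mins q is strictly between mins p and j, hence in idxs p
    have htp : mins N x q ∈ idxs N x p :=
      convex hsort hπ hp _ (hminmem p hp) _ hjp _
        (hsub q hq (hminmem q hq)) hts.le htj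
    exact absurd (hdisjI p hp q hq _ htp (hminmem q hq)).symm
      (fun h => lt_irrefl _ (h ▸ hts))
  · rintro ⟨hsj, hall⟩
    have hjE : x j ∈ π.biUnion id := by
      rw [hcover]; exact Finset.mem_image_of_mem x hj
    obtain ⟨q, hq, hxjq⟩ := Finset.mem_biUnion.1 hjE
    simp only [id] at hxjq
    have hjq : j ∈ idxs N x q := Finset.mem_filter.2 ⟨hj, hxjq⟩
    rcases eq_or_ne q p with rfl | hqp
    · exact hjq
    · exfalso
      have ht : mins N x q ≤ j := min_unbot_le (hnep q hq) hjq
      have hts : mins N x q ≤ mins N x p :=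
        hall _ (Finset.mem_image_of_mem _ hq) ht
      have hsq : mins N x p ∈ idxs N x q :=
        convex hsort hπ hq _ (hminmem q hq) _ hjq _
          (hsub p hp (hminmem p hp)) hts hsj
      exact hqp (hdisjI q hq p hp _ hsq (hminmem p hp))

lemma mins_injOn : Set.InjOn (mins N x) π := by
  intro p hp q hq h
  by_contra hpq
  have h1 : mins N x p ∈ idxs N x p := min_unbot_mem (idxs_nonempty hπ hp)
  have h2 : mins N x q ∈ idxs N x q := min_unbot_mem (idxs_nonempty hπ hq)
  rw [h] at h1
  have := hπ.2.2.1 p hp q hq hpq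
  exact (Finset.disjoint_left.1 this (Finset.mem_filter.1 h1).2)
    (Finset.mem_filter.1 h2).2

end Structure

end KMedAux

open KMedAux in
/-- On a sorted 2d Pareto front of `N` points, at most `C(N, K)` distinct partitions into
`K` nonempty subsets occur as local minima of K-α-Med2dPF. -/
theorem card_localMin_le_choose (α : ℝ) (hα : 0 < α) (K : ℕ) (hK : 1 ≤ K)
    (N : ℕ) (x : ℕ → E2)
    (hsort : ∀ i j, 1 ≤ i → i < j → j ≤ N → x i 0 < x j 0 ∧ x j 1 < x i 1) :
    Set.ncard {π : Finset (Finset E2) |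
        IsLocalMinPartition α ((Finset.Icc 1 N).image x) K π} ≤ N.choose K := by
  classical
  have key := Set.ncard_le_ncard_of_injOn
    (s := {π : Finset (Finset E2) |
        IsLocalMinPartition α ((Finset.Icc 1 N).image x) K π})
    (t := ↑((Finset.Icc 1 N).powersetCard K))
    (fun π => π.image (mins N x)) ?maps ?inj (Set.toFinite _)
  · calc Set.ncard {π : Finset (Finset E2) |
        IsLocalMinPartition α ((Finset.Icc 1 N).image x) K π}
        ≤ (↑((Finset.Icc 1 N).powersetCard K) : Set (Finset ℕ)).ncard := key
      _ = ((Finset.Icc 1 N).powersetCard K).card := Set.ncard_coe_finset _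
      _ = (Finset.Icc 1 N).card.choose K := Finset.card_powersetCard _ _
      _ = N.choose K := by rw [Nat.card_Icc]; simp
  case maps =>
    intro π hπ
    simp only [Set.mem_setOf_eq] at hπ
    rw [Finset.mem_coe, Finset.mem_powersetCard]
    constructor
    · intro t ht
      obtain ⟨p, hp, rfl⟩ := Finset.mem_image.1 ht
      exact Finset.filter_subset _ _ (min_unbot_mem (idxs_nonempty hπ hp))
    · rw [Finset.card_image_of_injOn (mins_injOn hsort hπ)]
      exact hπ.1
  case inj =>
    intro π hπ π' hπ' heq
    replace heq : π.image (mins N x) = π'.image (mins N x) := heq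
    simp only [Set.mem_setOf_eq] at hπ hπ'
    have hsub : π ⊆ π' := by
      intro p hp
      have hs : mins N x p ∈ π'.image (mins N x) := by
        rw [← heq]; exact Finset.mem_image_of_mem _ hp
      obtain ⟨p', hp', hpp'⟩ := Finset.mem_image.1 hs
      have hidx : idxs N x p = idxs N x p' := by
        apply Finset.ext
        intro j
        constructor
        · intro hj
          have hjS : j ∈ Finset.Icc 1 N := Finset.filter_subset _ _ hj
          rw [mem_idxs_iff hsort hπ' hp' hjS, hpp', ← heq]
          exact (mem_idxs_iff hsort hπ hp hjS).1 hj
        · intro hj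
          have hjS : j ∈ Finset.Icc 1 N := Finset.filter_subset _ _ hj
          rw [mem_idxs_iff hsort hπ hp hjS, ← hpp', heq]
          exact (mem_idxs_iff hsort hπ' hp' hjS).1 hj
      have : p = p' := by
        rw [part_eq hπ hp, part_eq hπ' hp', hidx]
      exact this ▸ hp'
    exact Finset.eq_of_subset_of_card_le hsub (by rw [hπ.1, hπ'.1])
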